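/- Let n, q, N be positive integers, p : Fin N → ℝ with p j ≥ 0 and ∑_j p j = 1, let P : Fin N → Matrix n n ℝ be a family of symmetric matrices, S an n×n positive semidefinite real matrix, R a q×q positive semidefinite real matrix, K a q×n real matrix, Ā an n×n real matrix, i ∈ Fin N, and σ ∈ ℝ. Assume the matrix (P i) − ∑_j p j · (Āᵀ·(P j)·Ā) − S − Kᵀ·R·K is positive semidefinite. Then every x ∈ ℝⁿ with xᵀ·(P i)·x ≤ σ satisfies ∑_j p j · ((Ā·x)ᵀ·(P j)·(Ā·x)) ≤ σ. -/

import Mathlib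

open Matrix

/-- Positive control invariance of the terminal constraint set: if
`P i − ∑ⱼ pⱼ Āᵀ Pⱼ Ā − S − KᵀRK ⪰ 0`, then `xᵀ P i x ≤ σ` implies
`∑ⱼ pⱼ (Āx)ᵀ Pⱼ (Āx) ≤ σ`. -/
theorem stmt_15 (n q N : ℕ) (hn : 0 < n) (hq : 0 < q) (hN : 0 < N)
    (p : Fin N → ℝ) (hp : ∀ j, 0 ≤ p j) (hp1 : ∑ j, p j = 1)
    (P : Fin N → Matrix (Fin n) (Fin n) ℝ) (hPsymm : ∀ j, (P j).IsHermitian)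
    (S : Matrix (Fin n) (Fin n) ℝ) (hS : S.PosSemidef)
    (R : Matrix (Fin q) (Fin q) ℝ) (hR : R.PosSemidef)
    (K : Matrix (Fin q) (Fin n) ℝ) (Abar : Matrix (Fin n) (Fin n) ℝ)
    (i : Fin N) (σ : ℝ)
    (h : (P i - (∑ j, p j • (Abarᵀ * P j * Abar)) - S - Kᵀ * R * K).PosSemidef) :
    ∀ x : Fin n → ℝ, x ⬝ᵥ P i *ᵥ x ≤ σ →
      ∑ j, p j * ((Abar *ᵥ x) ⬝ᵥ P j *ᵥ (Abar *ᵥ x)) ≤ σ := by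
  intro x hx
  have hquad : ∀ j, x ⬝ᵥ (Abarᵀ * P j * Abar) *ᵥ x = (Abar *ᵥ x) ⬝ᵥ P j *ᵥ (Abar *ᵥ x) := by
    intro j
    rw [← mulVec_mulVec, ← mulVec_mulVec, dotProduct_mulVec, vecMul_transpose]
  have h1 := h.dotProduct_mulVec_nonneg x
  simp only [RCLike.star_def, star_trivial] at h1
  have hK : (0:ℝ) ≤ x ⬝ᵥ (Kᵀ * R * K) *ᵥ x := by
    have := hR.dotProduct_mulVec_nonneg (K *ᵥ x)
    simp only [star_trivial] at this
    rw [← mulVec_mulVec, ← mulVec_mulVec, dotProduct_mulVec, vecMul_transpose]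
    exact this
  have hSx : (0:ℝ) ≤ x ⬝ᵥ S *ᵥ x := by
    have := hS.dotProduct_mulVec_nonneg x; simpa using this
  have hsum : x ⬝ᵥ (∑ j, p j • (Abarᵀ * P j * Abar)) *ᵥ x
      = ∑ j, p j * ((Abar *ᵥ x) ⬝ᵥ P j *ᵥ (Abar *ᵥ x)) := by
    simp only [← hquad]
    rw [show (∑ j, p j • (Abarᵀ * P j * Abar)) *ᵥ x = ∑ j, (p j • (Abarᵀ * P j * Abar)) *ᵥ x by
      ext k
      simp [mulVec, dotProduct, Finset.sum_apply, Matrix.sum_apply, Finset.sum_mul]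
      exact Finset.sum_comm]
    simp only [smul_mulVec]
    simp [dotProduct, Finset.sum_apply, Finset.mul_sum, mul_comm, mul_left_comm, mul_assoc]
    exact Finset.sum_comm
  have hexp : x ⬝ᵥ (P i - (∑ j, p j • (Abarᵀ * P j * Abar)) - S - Kᵀ * R * K) *ᵥ x
      = x ⬝ᵥ P i *ᵥ x - x ⬝ᵥ (∑ j, p j • (Abarᵀ * P j * Abar)) *ᵥ x
        - x ⬝ᵥ S *ᵥ x - x ⬝ᵥ (Kᵀ * R * K) *ᵥ x := by
    simp [sub_mulVec, dotProduct_sub]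
  rw [hexp, hsum] at h1
  linarith
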